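/- Let K be a compact subset of the cube [0,1]^Γ and let σ : Γ → P be a map such that the quasi metric f(x,y) = sup_{γ∈Γ} h^{σ(γ)}(|x_γ − y_γ|) fragments K, and suppose that σ(Γ) is a σ-bounded subset of (ℕ^ℕ, ≤). Then K is Radon-Nikodým compact (there exists a lower semicontinuous metric on K fragmenting K), and moreover there exist sets Γ_n ⊆ Γ (n ∈ ℕ) with Γ = ⋃_{n∈ℕ} Γ_n such that each pseudometric d_{Γ_n} fragments K. -/

import Mathlib

open Set Topology Cardinal

/-- A map `f : X × X → ℝ` fragments the topological space `X` if for every nonempty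
subset `L` of `X` and every `ε > 0` there is a nonempty relatively open subset of `L`
of `f`-diameter less than `ε`. -/
def Fragments {X : Type*} [TopologicalSpace X] (f : X → X → ℝ) : Prop :=
  ∀ L : Set X, L.Nonempty → ∀ ε : ℝ, 0 < ε →
    ∃ V : Set X, IsOpen V ∧ (V ∩ L).Nonempty ∧
      ∀ x ∈ V ∩ L, ∀ y ∈ V ∩ L, f x y < ε

/-- `f` (defined on the ambient space `X`) fragments the subset `K`. -/
def FragmentsOn {X : Type*} [TopologicalSpace X] (f : X → X → ℝ) (K : Set X) : Prop :=
  ∀ L : Set X, L ⊆ K → L.Nonempty → ∀ ε : ℝ, 0 < ε →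
    ∃ V : Set X, IsOpen V ∧ (V ∩ L).Nonempty ∧
      ∀ x ∈ V ∩ L, ∀ y ∈ V ∩ L, f x y < ε

/-- A quasi metric: nonnegative, symmetric, and vanishing exactly on the diagonal. -/
def IsQuasiMetric {X : Type*} (f : X → X → ℝ) : Prop :=
  (∀ x y, 0 ≤ f x y) ∧ (∀ x y, f x y = f y x) ∧ (∀ x y, f x y = 0 ↔ x = y)

/-- A metric (as a two-variable real function): symmetric, vanishing exactly on the
diagonal, and satisfying the triangle inequality. -/
def IsMetricFun {X : Type*} (d : X → X → ℝ) : Prop :=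
  (∀ x y, d x y = d y x) ∧ (∀ x y, d x y = 0 ↔ x = y) ∧
    (∀ x y z, d x z ≤ d x y + d y z)

/-- Lower semicontinuity of a two-variable map for the product topology. -/
def LSC {X : Type*} [TopologicalSpace X] (f : X → X → ℝ) : Prop :=
  LowerSemicontinuous (fun p : X × X => f p.1 p.2)

/-- A subset of `ℕ → ℕ` is σ-bounded (for the pointwise order) if it is a countable
union of order-bounded sets. -/
def SigmaBounded (S : Set (ℕ → ℕ)) : Prop :=
  ∃ B : ℕ → Set (ℕ → ℕ), S ⊆ (⋃ n, B n) ∧ ∀ n, ∃ τ : ℕ → ℕ, ∀ σ ∈ B n, σ ≤ τ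

/-- The cardinal `𝔟`: the least cardinality of a subset of `ℕ → ℕ` which is not
σ-bounded for the pointwise order. -/
noncomputable def cardinalB : Cardinal :=
  sInf { c | ∃ S : Set (ℕ → ℕ), ¬ SigmaBounded S ∧ #S = c }

/-- `P`: the set of strictly increasing sequences of positive integers. -/
def Pset : Set (ℕ → ℕ) := {σ | StrictMono σ ∧ ∀ n, 0 < σ n}

/-- The function `h^σ : [0,∞) → ℝ`: `h^σ(0) = 0`, `h^σ(t) = 1/σ_n` whenever
`1/(n+1) < t ≤ 1/n` (so that `n = ⌊1/t⌋`), and `h^σ(t) = 1/σ_1` for `t > 1`. -/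
noncomputable def hFun (σ : ℕ → ℕ) (t : ℝ) : ℝ :=
  if t ≤ 0 then 0
  else if 1 < t then ((σ 1 : ℝ))⁻¹
  else ((σ (Nat.floor (1 / t)) : ℝ))⁻¹

/-- The pseudometric `d_A` on `[0,1]^Γ` given by `d_A(x,y) = sup_{γ ∈ A} |x_γ - y_γ|`. -/
noncomputable def dGamma {Γ : Type*} (A : Set Γ) (x y : Γ → ℝ) : ℝ :=
  ⨆ γ : A, |x γ - y γ|

/-- If `K ⊆ [0,1]^Γ` is compact, `σ : Γ → P` is such that
`f(x,y) = sup_γ h^{σ(γ)}(|x_γ - y_γ|)` fragments `K`, and `σ(Γ)` is σ-bounded, then `K` is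
Radon-Nikodým compact, and moreover `Γ = ⋃_n Γ_n` with each `d_{Γ_n}` fragmenting `K`. -/
-- general LSC of bounded sup
lemma lsc_ciSup {X : Type*} [TopologicalSpace X] {ι : Type*} (f : ι → X → ℝ)
    (hc : ∀ i, LowerSemicontinuous (f i)) (hb : ∀ i x, f i x ≤ 1) :
    LowerSemicontinuous (fun x => ⨆ i, f i x) := by
  rcases isEmpty_or_nonempty ι with h | h
  · simp only [Real.iSup_of_isEmpty]
    exact lowerSemicontinuous_const
  · intro x c hcx
    obtain ⟨i, hi⟩ := exists_lt_of_lt_ciSup hcx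
    filter_upwards [hc i x c hi] with y hy
    exact lt_of_lt_of_le hy (le_ciSup (⟨1, by rintro _ ⟨j, rfl⟩; exact hb j y⟩ : BddAbove (Set.range fun i => f i y)) i)

lemma lsc_const_mul {X : Type*} [TopologicalSpace X] {g : X → ℝ}
    (hg : LowerSemicontinuous g) {c : ℝ} (hc : 0 < c) :
    LowerSemicontinuous (fun x => c * g x) := by
  intro x b hb
  have h1 : b / c < g x := (div_lt_iff₀ hc).2 (by simp only at hb; linarith [mul_comm c (g x)])
  filter_upwards [hg x _ h1] with y hy
  have h2 := (div_lt_iff₀ hc).1 hy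
  show b < c * g y
  linarith [mul_comm (g y) c]

lemma hFun_le_one (σ : ℕ → ℕ) (hσ : ∀ n, 0 < σ n) (t : ℝ) : hFun σ t ≤ 1 := by
  have h1 : ∀ k, (1:ℝ) ≤ (σ k : ℝ) := fun k => by exact_mod_cast hσ k
  unfold hFun
  split_ifs
  · norm_num
  · exact inv_le_one_of_one_le₀ (h1 1)
  · exact inv_le_one_of_one_le₀ (h1 _)

lemma hFun_ge {σ τ : ℕ → ℕ} (hσ : σ ∈ Pset) (hle : σ ≤ τ) (hmono : Monotone τ)
    (hpos : ∀ k, 0 < τ k) {N : ℕ} (hN : 1 ≤ N) {t : ℝ} (ht : (N : ℝ)⁻¹ < t) :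
    ((τ N : ℝ))⁻¹ ≤ hFun σ t := by
  have hNR : (0:ℝ) < N := by exact_mod_cast hN
  have ht0 : 0 < t := lt_trans (by positivity) ht
  have key : ∀ m : ℕ, m ≤ N → ((τ N : ℝ))⁻¹ ≤ ((σ m : ℝ))⁻¹ := by
    intro m hm
    have h1 : σ m ≤ τ N := (hle m).trans (hmono hm)
    have h2 : (0:ℝ) < (σ m : ℝ) := by exact_mod_cast hσ.2 m
    exact inv_anti₀ h2 (by exact_mod_cast h1)
  unfold hFun
  rw [if_neg (not_le.2 ht0)]
  by_cases h1 : 1 < t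
  · rw [if_pos h1]; exact key 1 hN
  · rw [if_neg h1]
    apply key
    have hlt : 1 / t < (N : ℝ) := by
      rw [div_lt_iff₀ ht0]
      have h2 := mul_lt_mul_of_pos_right ht hNR
      rw [inv_mul_cancel₀ hNR.ne'] at h2
      linarith [mul_comm t (N:ℝ)]
    have := (Nat.floor_lt (by positivity : (0:ℝ) ≤ 1/t)).2 hlt
    omega

section dG
variable {Γ : Type*}

lemma dGamma_nonneg (A : Set Γ) (x y : Γ → ℝ) : 0 ≤ dGamma A x y :=
  Real.iSup_nonneg fun _ => abs_nonneg _

lemma abs_sub_le_one' {x y : Γ → ℝ} (hx : ∀ γ, x γ ∈ Set.Icc (0:ℝ) 1)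
    (hy : ∀ γ, y γ ∈ Set.Icc (0:ℝ) 1) (γ : Γ) : |x γ - y γ| ≤ 1 := by
  have h1 := hx γ; have h2 := hy γ
  rw [abs_sub_le_iff]
  constructor <;> [skip; skip] <;> simp [Set.mem_Icc] at h1 h2 <;> linarith

lemma dGamma_le_one {A : Set Γ} {x y : Γ → ℝ} (hx : ∀ γ, x γ ∈ Set.Icc (0:ℝ) 1)
    (hy : ∀ γ, y γ ∈ Set.Icc (0:ℝ) 1) : dGamma A x y ≤ 1 :=
  Real.iSup_le (fun γ => abs_sub_le_one' hx hy γ) zero_le_one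

lemma coord_le_dGamma {A : Set Γ} {x y : Γ → ℝ} (hx : ∀ γ, x γ ∈ Set.Icc (0:ℝ) 1)
    (hy : ∀ γ, y γ ∈ Set.Icc (0:ℝ) 1) {γ : Γ} (hγ : γ ∈ A) :
    |x γ - y γ| ≤ dGamma A x y :=
  le_ciSup (⟨1, by rintro _ ⟨j, rfl⟩; exact abs_sub_le_one' hx hy _⟩ :
    BddAbove (Set.range fun γ : A => |x γ - y γ|)) (⟨γ, hγ⟩ : A)

lemma dGamma_comm (A : Set Γ) (x y : Γ → ℝ) : dGamma A x y = dGamma A y x := by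
  unfold dGamma
  congr 1
  funext γ
  exact abs_sub_comm _ _

lemma dGamma_self (A : Set Γ) (x : Γ → ℝ) : dGamma A x x = 0 := by
  unfold dGamma
  simp [Real.iSup_const_zero]

lemma dGamma_triangle {A : Set Γ} {x y z : Γ → ℝ} (hx : ∀ γ, x γ ∈ Set.Icc (0:ℝ) 1)
    (hy : ∀ γ, y γ ∈ Set.Icc (0:ℝ) 1) (hz : ∀ γ, z γ ∈ Set.Icc (0:ℝ) 1) :
    dGamma A x z ≤ dGamma A x y + dGamma A y z := by
  apply Real.iSup_le _ (add_nonneg (dGamma_nonneg A x y) (dGamma_nonneg A y z))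
  rintro ⟨γ, hγ⟩
  calc |x γ - z γ| ≤ |x γ - y γ| + |y γ - z γ| := abs_sub_le _ _ _
    _ ≤ dGamma A x y + dGamma A y z :=
      add_le_add (coord_le_dGamma hx hy hγ) (coord_le_dGamma hy hz hγ)

end dG


lemma frag_transfer {Γ : Type*} (K : Set (Γ → ℝ))
    (hcube : ∀ x ∈ K, ∀ γ, x γ ∈ Set.Icc (0 : ℝ) 1)
    (σ : Γ → (ℕ → ℕ)) (hσP : ∀ γ, σ γ ∈ Pset)
    (hfrag : FragmentsOn (fun x y => ⨆ γ, hFun (σ γ) |x γ - y γ|) K)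
    (A : Set Γ) (τ : ℕ → ℕ) (hτ : ∀ γ ∈ A, σ γ ≤ τ) :
    FragmentsOn (dGamma A) K := by
  intro L hLK hLne ε hε
  set T : ℕ → ℕ := fun k => (Finset.range (k + 1)).sup τ + 1 with hTdef
  have hTmono : Monotone T := fun a b hab =>
    add_le_add_left (Finset.sup_mono (Finset.range_subset_range.2 (by omega))) 1
  have hTpos : ∀ k, 0 < T k := fun k => Nat.succ_pos _
  have hτT : ∀ γ ∈ A, σ γ ≤ T := by
    intro γ hγ k
    exact le_trans (hτ γ hγ k)
      (le_trans (Finset.le_sup (Finset.mem_range.2 (Nat.lt_succ_self k))) (Nat.le_succ _))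
  obtain ⟨n₀, hn₀⟩ := exists_nat_gt (1 / ε)
  set N : ℕ := n₀ + 1 with hNdef
  have hN1 : 1 ≤ N := Nat.le_add_left _ _
  have hNR : (0:ℝ) < N := by exact_mod_cast hN1
  have hNε : (N : ℝ)⁻¹ < ε := by
    have h1 : (1:ℝ) / ε < N := lt_of_lt_of_le hn₀ (by exact_mod_cast Nat.le_succ n₀)
    have h2 : (1:ℝ) / N < 1 / (1 / ε) := one_div_lt_one_div_of_lt (by positivity) h1
    rwa [one_div_one_div, one_div] at h2
  set δ : ℝ := ((T N : ℝ))⁻¹ with hδdef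
  have hδ : 0 < δ := by
    have := hTpos N
    positivity
  obtain ⟨V, hVopen, hVne, hVdiam⟩ := hfrag L hLK hLne δ hδ
  refine ⟨V, hVopen, hVne, fun x hx y hy => ?_⟩
  have key : ∀ γ ∈ A, |x γ - y γ| ≤ (N:ℝ)⁻¹ := by
    intro γ hγ
    by_contra h
    push_neg at h
    have h1 : δ ≤ hFun (σ γ) |x γ - y γ| :=
      hFun_ge (hσP γ) (hτT γ hγ) hTmono hTpos hN1 h
    have h2 : hFun (σ γ) |x γ - y γ| ≤ ⨆ γ', hFun (σ γ') |x γ' - y γ'| :=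
      le_ciSup (⟨1, by rintro _ ⟨γ', rfl⟩; exact hFun_le_one _ (hσP γ').2 _⟩ :
        BddAbove (Set.range fun γ' => hFun (σ γ') |x γ' - y γ'|)) γ
    exact absurd (hVdiam x hx y hy) (not_lt.2 (h1.trans h2))
  calc dGamma A x y ≤ (N:ℝ)⁻¹ :=
        Real.iSup_le (fun γ => key γ.1 γ.2) (by positivity)
    _ < ε := hNε


theorem statement5 {Γ : Type*} (K : Set (Γ → ℝ))
    (hcube : ∀ x ∈ K, ∀ γ, x γ ∈ Set.Icc (0 : ℝ) 1) (hcomp : IsCompact K)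
    (σ : Γ → (ℕ → ℕ)) (hσP : ∀ γ, σ γ ∈ Pset)
    (hfrag : FragmentsOn (fun x y => ⨆ γ, hFun (σ γ) |x γ - y γ|) K)
    (hσb : SigmaBounded (σ '' Set.univ)) :
    (∃ d : K → K → ℝ, IsMetricFun d ∧ LSC d ∧ Fragments d) ∧
      ∃ Γn : ℕ → Set Γ, (⋃ n, Γn n) = Set.univ ∧
        ∀ n, FragmentsOn (dGamma (Γn n)) K := by
  classical
  obtain ⟨B, hB1, hB2⟩ := hσb
  choose τ hτ using hB2
  set Γn : ℕ → Set Γ := fun n => σ ⁻¹' (B n) with hΓndef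
  have hUnion : (⋃ n, Γn n) = Set.univ := by
    ext γ
    simp only [Set.mem_iUnion, Set.mem_univ, iff_true, hΓndef, Set.mem_preimage]
    have : σ γ ∈ ⋃ n, B n := hB1 ⟨γ, Set.mem_univ _, rfl⟩
    simpa using this
  have hfragn : ∀ n, FragmentsOn (dGamma (Γn n)) K := fun n =>
    frag_transfer K hcube σ hσP hfrag (Γn n) (τ n) (fun γ hγ => hτ n (σ γ) hγ)
  refine ⟨?_, Γn, hUnion, hfragn⟩
  -- Part 1: build the LSC metric
  set D : K → K → ℝ := fun x y => ⨆ n : ℕ, (2:ℝ)⁻¹ ^ n * dGamma (Γn n) x.1 y.1 with hDdef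
  have hcx : ∀ x : K, ∀ γ, (x : Γ → ℝ) γ ∈ Set.Icc (0:ℝ) 1 := fun x => hcube x.1 x.2
  have htermle : ∀ (x y : K) (n : ℕ), (2:ℝ)⁻¹ ^ n * dGamma (Γn n) x.1 y.1 ≤ 1 := by
    intro x y n
    have h1 : dGamma (Γn n) x.1 y.1 ≤ 1 := dGamma_le_one (hcx x) (hcx y)
    have h2 : (2:ℝ)⁻¹ ^ n ≤ 1 := pow_le_one₀ (by norm_num) (by norm_num)
    have h3 : (0:ℝ) ≤ dGamma (Γn n) x.1 y.1 := dGamma_nonneg _ _ _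
    nlinarith
  have htermnn : ∀ (x y : K) (n : ℕ), 0 ≤ (2:ℝ)⁻¹ ^ n * dGamma (Γn n) x.1 y.1 := by
    intro x y n
    have := dGamma_nonneg (Γn n) x.1 y.1
    positivity
  have hbdd : ∀ x y : K, BddAbove (Set.range fun n : ℕ => (2:ℝ)⁻¹ ^ n * dGamma (Γn n) x.1 y.1) :=
    fun x y => ⟨1, by rintro _ ⟨n, rfl⟩; exact htermle x y n⟩
  have hDnn : ∀ x y : K, 0 ≤ D x y := fun x y => Real.iSup_nonneg (htermnn x y)
  refine ⟨D, ⟨?_, ?_, ?_⟩, ?_, ?_⟩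
  · -- symmetry
    intro x y
    simp only [hDdef]
    congr 1
    funext n
    rw [dGamma_comm]
  · -- zero iff eq
    intro x y
    constructor
    · intro h0
      by_contra hne
      have hne' : (x : Γ → ℝ) ≠ (y : Γ → ℝ) := fun h => hne (Subtype.ext h)
      have : ∃ γ, (x : Γ → ℝ) γ ≠ (y : Γ → ℝ) γ := by
        by_contra hc
        push_neg at hc
        exact hne' (funext hc)
      obtain ⟨γ, hγ⟩ := this
      have hγU : γ ∈ ⋃ n, Γn n := hUnion ▸ Set.mem_univ γ
      obtain ⟨n, hn⟩ := Set.mem_iUnion.1 hγU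
      have h1 : 0 < |(x : Γ → ℝ) γ - (y : Γ → ℝ) γ| := abs_pos.2 (sub_ne_zero.2 hγ)
      have h2 : |(x : Γ → ℝ) γ - (y : Γ → ℝ) γ| ≤ dGamma (Γn n) x.1 y.1 :=
        coord_le_dGamma (hcx x) (hcx y) hn
      have h3 : 0 < (2:ℝ)⁻¹ ^ n * dGamma (Γn n) x.1 y.1 := by
        have : (0:ℝ) < (2:ℝ)⁻¹ ^ n := by positivity
        nlinarith
      have h4 : (2:ℝ)⁻¹ ^ n * dGamma (Γn n) x.1 y.1 ≤ D x y := le_ciSup (hbdd x y) n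
      linarith [h0 ▸ lt_of_lt_of_le h3 h4]
    · rintro rfl
      simp only [hDdef]
      have : ∀ n : ℕ, (2:ℝ)⁻¹ ^ n * dGamma (Γn n) x.1 x.1 = 0 := by
        intro n; rw [dGamma_self, mul_zero]
      calc (⨆ n : ℕ, (2:ℝ)⁻¹ ^ n * dGamma (Γn n) x.1 x.1) = ⨆ _ : ℕ, (0:ℝ) := by
            congr 1; funext n; exact this n
        _ = 0 := Real.iSup_const_zero
  · -- triangle
    intro x y z
    apply Real.iSup_le _ (add_nonneg (hDnn x y) (hDnn y z))
    intro n
    calc (2:ℝ)⁻¹ ^ n * dGamma (Γn n) x.1 z.1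
        ≤ (2:ℝ)⁻¹ ^ n * (dGamma (Γn n) x.1 y.1 + dGamma (Γn n) y.1 z.1) := by
          have := dGamma_triangle (A := Γn n) (hcx x) (hcx y) (hcx z)
          have hp : (0:ℝ) < (2:ℝ)⁻¹ ^ n := by positivity
          nlinarith
      _ = (2:ℝ)⁻¹ ^ n * dGamma (Γn n) x.1 y.1 + (2:ℝ)⁻¹ ^ n * dGamma (Γn n) y.1 z.1 := by ring
      _ ≤ D x y + D y z := add_le_add (le_ciSup (hbdd x y) n) (le_ciSup (hbdd y z) n)
  · -- LSC
    show LowerSemicontinuous fun p : K × K => D p.1 p.2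
    apply lsc_ciSup (f := fun n (p : K × K) => (2:ℝ)⁻¹ ^ n * dGamma (Γn n) p.1.1 p.2.1)
    · intro n
      apply lsc_const_mul _ (by positivity : (0:ℝ) < (2:ℝ)⁻¹ ^ n)
      apply lsc_ciSup (f := fun (γ : Γn n) (p : K × K) => |(p.1 : Γ → ℝ) γ - (p.2 : Γ → ℝ) γ|)
      · intro γ
        apply Continuous.lowerSemicontinuous
        exact (((continuous_apply (γ : Γ)).comp (continuous_subtype_val.comp continuous_fst)).sub
          ((continuous_apply (γ : Γ)).comp (continuous_subtype_val.comp continuous_snd))).abs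
      · intro γ p
        exact abs_sub_le_one' (hcx p.1) (hcx p.2) _
    · intro n p
      exact htermle p.1 p.2 n
  · -- Fragments
    intro L hLne ε hε
    obtain ⟨N, hN⟩ := exists_pow_lt_of_lt_one (half_pos hε) (by norm_num : (2:ℝ)⁻¹ < 1)
    have claim : ∀ M : ℕ, ∀ L' : Set (Γ → ℝ), L' ⊆ K → L'.Nonempty →
        ∃ V, IsOpen V ∧ (V ∩ L').Nonempty ∧
          ∀ x ∈ V ∩ L', ∀ y ∈ V ∩ L', ∀ k ≤ M, dGamma (Γn k) x y < ε / 2 := by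
      intro M
      induction M with
      | zero =>
        intro L' hL'K hL'ne
        obtain ⟨V, h1, h2, h3⟩ := hfragn 0 L' hL'K hL'ne (ε/2) (half_pos hε)
        exact ⟨V, h1, h2, fun x hx y hy k hk => (Nat.le_zero.1 hk) ▸ h3 x hx y hy⟩
      | succ M ih =>
        intro L' hL'K hL'ne
        obtain ⟨V, hVo, hVne, hVd⟩ := ih L' hL'K hL'ne
        obtain ⟨W, hWo, hWne, hWd⟩ := hfragn (M+1) (V ∩ L')
          (fun z hz => hL'K hz.2) hVne (ε/2) (half_pos hε)
        refine ⟨V ∩ W, hVo.inter hWo, ?_, ?_⟩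
        · obtain ⟨z, hzW, hzV, hzL⟩ := hWne
          exact ⟨z, ⟨hzV, hzW⟩, hzL⟩
        · intro x hx y hy k hk
          rcases Nat.lt_succ_iff_lt_or_eq.1 (Nat.lt_succ_of_le hk) with h | h
          · exact hVd x ⟨hx.1.1, hx.2⟩ y ⟨hy.1.1, hy.2⟩ k (Nat.lt_succ_iff.1 h)
          · subst h
            exact hWd x ⟨hx.1.2, hx.1.1, hx.2⟩ y ⟨hy.1.2, hy.1.1, hy.2⟩
    obtain ⟨V, hVo, hVne, hVd⟩ := claim N (Subtype.val '' L)
      (by rintro _ ⟨z, _, rfl⟩; exact z.2) (hLne.image _)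
    refine ⟨Subtype.val ⁻¹' V, hVo.preimage continuous_subtype_val, ?_, ?_⟩
    · obtain ⟨z, hzV, w, hwL, rfl⟩ := hVne
      exact ⟨w, hzV, hwL⟩
    · intro x hx y hy
      have hx' : (x : Γ → ℝ) ∈ V ∩ (Subtype.val '' L) := ⟨hx.1, ⟨x, hx.2, rfl⟩⟩
      have hy' : (y : Γ → ℝ) ∈ V ∩ (Subtype.val '' L) := ⟨hy.1, ⟨y, hy.2, rfl⟩⟩
      have hD : D x y ≤ ε / 2 := by
        apply Real.iSup_le _ (le_of_lt (half_pos hε))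
        intro n
        by_cases hn : n ≤ N
        · have h1 : dGamma (Γn n) x.1 y.1 < ε / 2 := hVd _ hx' _ hy' n hn
          have h2 : (2:ℝ)⁻¹ ^ n ≤ 1 := pow_le_one₀ (by norm_num) (by norm_num)
          nlinarith [dGamma_nonneg (Γn n) x.1 y.1]
        · push_neg at hn
          have h1 : dGamma (Γn n) x.1 y.1 ≤ 1 := dGamma_le_one (hcx x) (hcx y)
          have h2 : (2:ℝ)⁻¹ ^ n ≤ (2:ℝ)⁻¹ ^ N :=
            pow_le_pow_of_le_one (by norm_num) (by norm_num) (le_of_lt hn)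
          nlinarith [dGamma_nonneg (Γn n) x.1 y.1, pow_pos (by norm_num : (0:ℝ) < 2⁻¹) n]
      linarith
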